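/- Let φ : R → R' be a surjective Jordan homomorphism. If the commutator ideal K of R is a direct summand of R (there exists an ideal C of R with K + C = R and K ∩ C = {0}) and R' is a 2-torsion free semiprime ring, then φ is the direct sum of a homomorphism and an antihomomorphism from the ideal R onto the ideal R'. -/

import Mathlib

/-- An additive map `φ` between (possibly non-unital) associative rings is a
Jordan homomorphism if `φ(x²) = φ(x)²` and `φ(xyx) = φ(x)φ(y)φ(x)`. -/
def IsJordanHom {R R' : Type*} [NonUnitalRing R] [NonUnitalRing R'] (φ : R → R') : Prop :=
  (∀ x y : R, φ (x + y) = φ x + φ y) ∧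
  (∀ x : R, φ (x * x) = φ x * φ x) ∧
  (∀ x y : R, φ (x * y * x) = φ x * φ y * φ x)

/-- The commutator ideal of `R`: the two-sided ideal generated by all `xy − yx`. -/
def commutatorIdeal (R : Type*) [NonUnitalRing R] : TwoSidedIdeal R :=
  TwoSidedIdeal.span {z : R | ∃ x y : R, z = x * y - y * x}

/-- A ring is semiprime if `I² = {0}` implies `I = {0}` for every (two-sided) ideal `I`. -/
def IsSemiprimeRing (A : Type*) [NonUnitalRing A] : Prop :=
  ∀ I : TwoSidedIdeal A, (∀ x ∈ I, ∀ y ∈ I, x * y = 0) → I = ⊥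

/-- For surjective `φ` (so that `R'_φ = R'`): `φ` is the direct sum of a homomorphism
and an antihomomorphism from the ideal `I` of `R` onto the ideal `J` of `R'`. -/
def IsDirectSumHomAntihomOn {R R' : Type*} [NonUnitalRing R] [NonUnitalRing R']
    (φ : R → R') (I : TwoSidedIdeal R) (J : TwoSidedIdeal R') : Prop :=
  ∃ I₁ I₂ : TwoSidedIdeal R,
    (∀ u, u ∈ I ↔ ∃ u₁ ∈ I₁, ∃ u₂ ∈ I₂, u = u₁ + u₂) ∧
    (∀ u, (u ∈ I₁ ∧ u ∈ I₂) ↔ (φ u = 0 ∧ u ∈ I)) ∧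
    (∃ J₁ J₂ : TwoSidedIdeal R',
      (J₁ : Set R') = φ '' (I₁ : Set R) ∧
      (J₂ : Set R') = φ '' (I₂ : Set R) ∧
      J₁ ⊓ J₂ = ⊥ ∧
      (∀ a, a ∈ J ↔ ∃ b ∈ J₁, ∃ c ∈ J₂, a = b + c)) ∧
    (∀ u₁ ∈ I₁, ∀ x : R, φ (u₁ * x) = φ u₁ * φ x) ∧
    (∀ u₂ ∈ I₂, ∀ x : R, φ (u₂ * x) = φ x * φ u₂)

namespace JHAux

open Pointwise TwoSidedIdeal

variable {A : Type*} [NonUnitalRing A]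

lemma sqz (hsp : IsSemiprimeRing A) {t : A} (h1 : ∀ m, t * m * t = 0)
    (h2 : t * t = 0) : t = 0 := by
  have z3 : ∀ m, t * (m * t) = 0 := fun m => by rw [← mul_assoc]; exact h1 m
  have z1 : ∀ r, t * (t * r) = 0 := fun r => by rw [← mul_assoc, h2, zero_mul]
  have z4 : ∀ m s, t * (m * (t * s)) = 0 := fun m s => by
    have h : t * (m * (t * s)) = t * (m * t) * s := by simp only [mul_assoc]
    rw [h, z3, zero_mul]
  have z5 : ∀ r s, t * (r * (s * t)) = 0 := fun r s => by
    have h : r * (s * t) = r * s * t := by rw [mul_assoc]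
    rw [h, z3]
  have z6 : ∀ r s u, t * (r * (s * (t * u))) = 0 := fun r s u => by
    have h : r * (s * (t * u)) = r * s * (t * u) := by rw [mul_assoc]
    rw [h, z4]
  set U : Set A := {t} ∪ {t} * Set.univ ∪ Set.univ * {t} ∪ Set.univ * {t} * Set.univ with hU
  have base : ∀ z ∈ U, ∀ w ∈ U, z * w = 0 := by
    rintro z (((rfl | ⟨y, rfl, r, -, rfl⟩) | ⟨r, -, y, rfl, rfl⟩) |
      ⟨-, ⟨r, -, y, rfl, rfl⟩, s, -, rfl⟩) w (((rfl | ⟨y', rfl, r', -, rfl⟩) |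
      ⟨r', -, y', rfl, rfl⟩) | ⟨-, ⟨r', -, y', rfl, rfl⟩, s', -, rfl⟩) <;>
      simp [mul_assoc, h2, z1, z3, z4, z5, z6]
  have key1 : ∀ w ∈ AddSubgroup.closure U, ∀ z ∈ U, z * w = 0 := by
    intro w hw
    induction hw using AddSubgroup.closure_induction with
    | mem w' hw' => exact fun z hz => base z hz w' hw'
    | zero => intro z _; exact mul_zero z
    | add a b _ _ iha ihb =>
        intro z hz; rw [mul_add, iha z hz, ihb z hz, add_zero]
    | neg a _ iha => intro z hz; rw [mul_neg, iha z hz, neg_zero]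
  have key2 : ∀ z ∈ AddSubgroup.closure U, ∀ w ∈ AddSubgroup.closure U, z * w = 0 := by
    intro z hz
    induction hz using AddSubgroup.closure_induction with
    | mem z' hz' => exact fun w hw => key1 w hw z' hz'
    | zero => intro w _; exact zero_mul w
    | add a b _ _ iha ihb => intro w hw; rw [add_mul, iha w hw, ihb w hw, add_zero]
    | neg a _ iha => intro w hw; rw [neg_mul, iha w hw, neg_zero]
  have hbot : TwoSidedIdeal.span {t} = ⊥ := by
    apply hsp
    intro x hx y hy
    rw [TwoSidedIdeal.mem_span_iff_mem_addSubgroup_closure_nonunital] at hx hy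
    exact key2 x hx y hy
  have ht : t ∈ TwoSidedIdeal.span {t} := TwoSidedIdeal.subset_span rfl
  rwa [hbot, TwoSidedIdeal.mem_bot] at ht

lemma l1 (hsp : IsSemiprimeRing A) {a : A} (h : ∀ m, a * m * a = 0) : a = 0 := by
  have hax : ∀ x, a * x = 0 := by
    intro x
    apply sqz hsp (t := a * x)
    · intro m
      have e : a * x * m * (a * x) = a * (x * m) * a * x := by simp only [mul_assoc]
      rw [e, h, zero_mul]
    · have e : a * x * (a * x) = a * x * a * x := by simp only [mul_assoc]
      rw [e, h, zero_mul]
  exact sqz hsp h (hax a)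

lemma bl (hsp : IsSemiprimeRing A) (htf : ∀ x : A, x + x = 0 → x = 0)
    {a b : A} (h : ∀ m, a * m * b + b * m * a = 0) : ∀ m, a * m * b = 0 := by
  have hs : ∀ m, b * m * a = -(a * m * b) := fun m =>
    eq_neg_of_add_eq_zero_right (h m)
  intro n
  apply l1 hsp (a := a * n * b)
  intro m
  have step1 : b * m * (a * n * b) = b * m * b * n * a := by
    have e1 : b * m * (a * n * b) = b * m * a * n * b := by simp only [mul_assoc]
    rw [e1, hs m]
    have e2 : -(a * m * b) * n * b = -(a * (m * b * n) * b) := by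
      simp only [neg_mul, mul_assoc]
    rw [e2, ← hs (m * b * n)]
    simp only [mul_assoc]
  have hXX : a * n * b * m * (a * n * b) = -(a * n * b * m * (a * n * b)) := by
    calc a * n * b * m * (a * n * b) = a * n * (b * m * (a * n * b)) := by
          simp only [mul_assoc]
      _ = a * n * (b * m * b * n * a) := by rw [step1]
      _ = a * n * b * m * (b * n * a) := by simp only [mul_assoc]
      _ = a * n * b * m * -(a * n * b) := by rw [hs n]
      _ = -(a * n * b * m * (a * n * b)) := by rw [mul_neg]
  exact htf _ (add_eq_zero_iff_eq_neg.mpr hXX)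



section Jordan

variable {R R' : Type*} [NonUnitalRing R] [NonUnitalRing R'] (φ : R → R')

/-- The homomorphism defect. -/
def jE (x y : R) : R' := φ (x * y) - φ x * φ y

/-- The antihomomorphism defect. -/
def jD (x y : R) : R' := φ (x * y) - φ y * φ x

variable (hadd : ∀ x y, φ (x + y) = φ x + φ y)
  (hsq : ∀ x, φ (x * x) = φ x * φ x)
  (htri : ∀ x y, φ (x * y * x) = φ x * φ y * φ x)
  (hsurj : Function.Surjective φ)
  (hsp : IsSemiprimeRing R')
  (htf : ∀ x : R', x + x = 0 → x = 0)

include hadd in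
lemma jE_add_left (x u y : R) : jE φ (x + u) y = jE φ x y + jE φ u y := by
  unfold jE; rw [add_mul, hadd, hadd, add_mul]; abel

include hadd in
lemma jE_add_right (x y v : R) : jE φ x (y + v) = jE φ x y + jE φ x v := by
  unfold jE; rw [mul_add, hadd, hadd, mul_add]; abel

include hadd in
lemma jD_add_left (x u y : R) : jD φ (x + u) y = jD φ x y + jD φ u y := by
  unfold jD; rw [add_mul, hadd, hadd, mul_add]; abel

include hadd in
lemma jD_add_right (x y v : R) : jD φ x (y + v) = jD φ x y + jD φ x v := by
  unfold jD; rw [mul_add, hadd, hadd, add_mul]; abel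

include hadd hsq in
lemma jF1 (x y : R) : φ (x * y + y * x) = φ x * φ y + φ y * φ x := by
  have e1 : (x + y) * (x + y) = x * x + (x * y + y * x) + y * y := by
    rw [mul_add, add_mul, add_mul]; abel
  have h := hsq (x + y)
  rw [e1] at h
  rw [hadd (x * x + (x * y + y * x)) (y * y), hadd (x * x) (x * y + y * x),
    hsq, hsq, hadd x y] at h
  have e2 : φ (x * y + y * x)
      = (φ x * φ x + φ (x * y + y * x) + φ y * φ y) - φ x * φ x - φ y * φ y := by
    abel
  rw [e2, h]
  simp only [add_mul, mul_add]
  abel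

include hadd hsq in
lemma jE_skew (x y : R) : jE φ y x = -(jE φ x y) := by
  have h2 : φ (x * y) + φ (y * x) = φ x * φ y + φ y * φ x := by
    rw [← hadd]; exact jF1 φ hadd hsq x y
  have h3 : φ (y * x) = φ x * φ y + φ y * φ x - φ (x * y) := by
    rw [← h2]; abel
  unfold jE; rw [h3]; abel

include hadd htri in
lemma jF2 (x y z : R) :
    φ (x * z * y + y * z * x) = φ x * φ z * φ y + φ y * φ z * φ x := by
  have e1 : (x + y) * z * (x + y) = x * z * x + (x * z * y + y * z * x) + y * z * y := by
    simp only [add_mul, mul_add]; abel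
  have h := htri (x + y) z
  rw [e1] at h
  rw [hadd (x * z * x + (x * z * y + y * z * x)) (y * z * y),
    hadd (x * z * x) (x * z * y + y * z * x), htri, htri, hadd x y] at h
  have e2 : φ (x * z * y + y * z * x)
      = (φ x * φ z * φ x + φ (x * z * y + y * z * x) + φ y * φ z * φ y)
        - φ x * φ z * φ x - φ y * φ z * φ y := by abel
  rw [e2, h]
  simp only [add_mul, mul_add]
  abel

include hadd htri in
lemma jStar (x y z : R) :
    φ (x * y) * φ z * φ (y * x) + φ (y * x) * φ z * φ (x * y)
      = φ x * (φ y * φ z * φ y) * φ x + φ y * (φ x * φ z * φ x) * φ y := by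
  have h := jF2 φ hadd htri (x * y) (y * x) z
  have r1 : (x * y) * z * (y * x) = x * (y * z * y) * x := by simp only [mul_assoc]
  have r2 : (y * x) * z * (x * y) = y * (x * z * x) * y := by simp only [mul_assoc]
  rw [r1, r2, hadd] at h
  simp only [htri] at h
  exact h.symm

include hadd hsq htri hsurj in
lemma jB7 (x y : R) (c : R') :
    jE φ x y * c * jD φ x y + jD φ x y * c * jE φ x y = 0 := by
  obtain ⟨z, rfl⟩ := hsurj c
  have hst := jStar φ hadd htri x y z
  have hxy : φ (x * y) = φ x * φ y + jE φ x y := by unfold jE; abel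
  have hyx : φ (y * x) = φ y * φ x - jE φ x y := by
    have h : φ (y * x) = φ y * φ x + jE φ y x := by unfold jE; abel
    rw [h, jE_skew φ hadd hsq, ← sub_eq_add_neg]
  have hq : jD φ x y = φ x * φ y + jE φ x y - φ y * φ x := by
    unfold jD; rw [hxy]
  rw [hxy, hyx] at hst
  rw [hq]
  have key : jE φ x y * φ z * (φ x * φ y + jE φ x y - φ y * φ x)
        + (φ x * φ y + jE φ x y - φ y * φ x) * φ z * jE φ x y
      = (φ x * (φ y * φ z * φ y) * φ x + φ y * (φ x * φ z * φ x) * φ y)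
        - ((φ x * φ y + jE φ x y) * φ z * (φ y * φ x - jE φ x y)
            + (φ y * φ x - jE φ x y) * φ z * (φ x * φ y + jE φ x y)) := by
    simp only [mul_add, add_mul, mul_sub, sub_mul, mul_assoc]; abel
  rw [key, hst, sub_self]

include hadd hsq htri hsurj hsp htf in
lemma c1e (x y : R) (c : R') : jE φ x y * c * jD φ x y = 0 :=
  bl hsp htf (fun m => jB7 φ hadd hsq htri hsurj x y m) c

include hadd hsq htri hsurj hsp htf in
lemma c1d (x y : R) (c : R') : jD φ x y * c * jE φ x y = 0 := by
  have h := jB7 φ hadd hsq htri hsurj x y c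
  rwa [c1e φ hadd hsq htri hsurj hsp htf, zero_add] at h


include hadd hsq htri hsurj hsp htf in
lemma c3e (x u y : R) (m : R') :
    jE φ x y * m * jD φ u y + jE φ u y * m * jD φ x y = 0 := by
  have h := c1e φ hadd hsq htri hsurj hsp htf (x + u) y m
  rw [jE_add_left φ hadd, jD_add_left φ hadd] at h
  simp only [add_mul, mul_add, c1e φ hadd hsq htri hsurj hsp htf,
    zero_add, add_zero] at h
  rw [add_comm] at h
  exact h

include hadd hsq htri hsurj hsp htf in
lemma c3d (x u y : R) (m : R') :
    jD φ x y * m * jE φ u y + jD φ u y * m * jE φ x y = 0 := by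
  have h := c1d φ hadd hsq htri hsurj hsp htf (x + u) y m
  rw [jE_add_left φ hadd, jD_add_left φ hadd] at h
  simp only [add_mul, mul_add, c1d φ hadd hsq htri hsurj hsp htf,
    zero_add, add_zero] at h
  rw [add_comm] at h
  exact h

include hadd hsq htri hsurj hsp htf in
lemma c4e (x u y : R) (c : R') : jE φ x y * c * jD φ u y = 0 := by
  apply l1 hsp
  intro m
  have hflip : jD φ u y * m * jE φ x y = -(jD φ x y * m * jE φ u y) :=
    eq_neg_of_add_eq_zero_right (c3d φ hadd hsq htri hsurj hsp htf x u y m)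
  calc jE φ x y * c * jD φ u y * m * (jE φ x y * c * jD φ u y)
      = jE φ x y * c * (jD φ u y * m * jE φ x y) * (c * jD φ u y) := by
        simp only [mul_assoc]
    _ = jE φ x y * c * -(jD φ x y * m * jE φ u y) * (c * jD φ u y) := by
        rw [hflip]
    _ = -(jE φ x y * c * jD φ x y * m * (jE φ u y * c * jD φ u y)) := by
        simp only [mul_neg, neg_mul, mul_assoc]
    _ = 0 := by
        rw [c1e φ hadd hsq htri hsurj hsp htf, zero_mul, zero_mul, neg_zero]

include hadd hsq htri hsurj hsp htf in
lemma c4d (x u y : R) (c : R') : jD φ x y * c * jE φ u y = 0 := by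
  apply l1 hsp
  intro m
  have hflip : jE φ u y * m * jD φ x y = -(jE φ x y * m * jD φ u y) :=
    eq_neg_of_add_eq_zero_right (c3e φ hadd hsq htri hsurj hsp htf x u y m)
  calc jD φ x y * c * jE φ u y * m * (jD φ x y * c * jE φ u y)
      = jD φ x y * c * (jE φ u y * m * jD φ x y) * (c * jE φ u y) := by
        simp only [mul_assoc]
    _ = jD φ x y * c * -(jE φ x y * m * jD φ u y) * (c * jE φ u y) := by
        rw [hflip]
    _ = -(jD φ x y * c * jE φ x y * m * (jD φ u y * c * jE φ u y)) := by
        simp only [mul_neg, neg_mul, mul_assoc]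
    _ = 0 := by
        rw [c1d φ hadd hsq htri hsurj hsp htf, zero_mul, zero_mul, neg_zero]

include hadd hsq htri hsurj hsp htf in
lemma c5d (x u y₁ y₂ : R) (m : R') :
    jD φ x y₁ * m * jE φ u y₂ + jD φ x y₂ * m * jE φ u y₁ = 0 := by
  have h := c4d φ hadd hsq htri hsurj hsp htf x u (y₁ + y₂) m
  rw [jE_add_right φ hadd, jD_add_right φ hadd] at h
  simp only [add_mul, mul_add, c4d φ hadd hsq htri hsurj hsp htf,
    zero_add, add_zero] at h
  rw [add_comm] at h
  exact h

include hadd hsq htri hsurj hsp htf in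
lemma c5e (x u y₁ y₂ : R) (m : R') :
    jE φ x y₁ * m * jD φ u y₂ + jE φ x y₂ * m * jD φ u y₁ = 0 := by
  have h := c4e φ hadd hsq htri hsurj hsp htf x u (y₁ + y₂) m
  rw [jE_add_right φ hadd, jD_add_right φ hadd] at h
  simp only [add_mul, mul_add, c4e φ hadd hsq htri hsurj hsp htf,
    zero_add, add_zero] at h
  rw [add_comm] at h
  exact h

include hadd hsq htri hsurj hsp htf in
lemma c6e (x u y₁ y₂ : R) (c : R') : jE φ x y₁ * c * jD φ u y₂ = 0 := by
  apply l1 hsp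
  intro m
  have hflip : jD φ u y₂ * m * jE φ x y₁ = -(jD φ u y₁ * m * jE φ x y₂) :=
    eq_neg_of_add_eq_zero_left (c5d φ hadd hsq htri hsurj hsp htf u x y₂ y₁ m)
  calc jE φ x y₁ * c * jD φ u y₂ * m * (jE φ x y₁ * c * jD φ u y₂)
      = jE φ x y₁ * c * (jD φ u y₂ * m * jE φ x y₁) * (c * jD φ u y₂) := by
        simp only [mul_assoc]
    _ = jE φ x y₁ * c * -(jD φ u y₁ * m * jE φ x y₂) * (c * jD φ u y₂) := by
        rw [hflip]
    _ = -(jE φ x y₁ * c * jD φ u y₁ * m * (jE φ x y₂ * c * jD φ u y₂)) := by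
        simp only [mul_neg, neg_mul, mul_assoc]
    _ = 0 := by
        rw [c4e φ hadd hsq htri hsurj hsp htf, zero_mul, zero_mul, neg_zero]

include hadd hsq htri hsurj hsp htf in
lemma c6d (x u y₁ y₂ : R) (c : R') : jD φ x y₁ * c * jE φ u y₂ = 0 := by
  apply l1 hsp
  intro m
  have hflip : jE φ u y₂ * m * jD φ x y₁ = -(jE φ u y₁ * m * jD φ x y₂) :=
    eq_neg_of_add_eq_zero_left (c5e φ hadd hsq htri hsurj hsp htf u x y₂ y₁ m)
  calc jD φ x y₁ * c * jE φ u y₂ * m * (jD φ x y₁ * c * jE φ u y₂)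
      = jD φ x y₁ * c * (jE φ u y₂ * m * jD φ x y₁) * (c * jE φ u y₂) := by
        simp only [mul_assoc]
    _ = jD φ x y₁ * c * -(jE φ u y₁ * m * jD φ x y₂) * (c * jE φ u y₂) := by
        rw [hflip]
    _ = -(jD φ x y₁ * c * jE φ u y₁ * m * (jD φ x y₂ * c * jE φ u y₂)) := by
        simp only [mul_neg, neg_mul, mul_assoc]
    _ = 0 := by
        rw [c4d φ hadd hsq htri hsurj hsp htf, zero_mul, zero_mul, neg_zero]

include hadd hsq htri hsurj hsp htf in
lemma c7e (x y u v : R) : jE φ x y * jD φ u v = 0 := by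
  apply l1 hsp
  intro m
  calc jE φ x y * jD φ u v * m * (jE φ x y * jD φ u v)
      = jE φ x y * (jD φ u v * m * jE φ x y) * jD φ u v := by
        simp only [mul_assoc]
    _ = 0 := by
        rw [c6d φ hadd hsq htri hsurj hsp htf, mul_zero, zero_mul]

include hadd hsq htri hsurj hsp htf in
lemma c7d (x y u v : R) : jD φ u v * jE φ x y = 0 := by
  apply l1 hsp
  intro m
  calc jD φ u v * jE φ x y * m * (jD φ u v * jE φ x y)
      = jD φ u v * (jE φ x y * m * jD φ u v) * jE φ x y := by
        simp only [mul_assoc]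
    _ = 0 := by
        rw [c6e φ hadd hsq htri hsurj hsp htf, mul_zero, zero_mul]


/-- Two-sided annihilator of an ideal. -/
def annIdeal {A : Type*} [NonUnitalRing A] (I : TwoSidedIdeal A) : TwoSidedIdeal A :=
  TwoSidedIdeal.mk' {a | ∀ e ∈ I, a * e = 0 ∧ e * a = 0}
    (fun e _ => ⟨zero_mul e, mul_zero e⟩)
    (fun {x y} hx hy e he => ⟨by rw [add_mul, (hx e he).1, (hy e he).1, add_zero],
      by rw [mul_add, (hx e he).2, (hy e he).2, add_zero]⟩)
    (fun {x} hx e he => ⟨by rw [neg_mul, (hx e he).1, neg_zero],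
      by rw [mul_neg, (hx e he).2, neg_zero]⟩)
    (fun {x y} hy e he => ⟨by rw [mul_assoc, (hy e he).1, mul_zero],
      by rw [← mul_assoc]; exact (hy _ (I.mul_mem_right e x he)).2⟩)
    (fun {x y} hx e he => ⟨by rw [mul_assoc]; exact (hx _ (I.mul_mem_left y e he)).1,
      by rw [← mul_assoc, (hx e he).2, zero_mul]⟩)

lemma mem_annIdeal {A : Type*} [NonUnitalRing A] {I : TwoSidedIdeal A} {a : A} :
    a ∈ annIdeal I ↔ ∀ e ∈ I, a * e = 0 ∧ e * a = 0 :=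
  TwoSidedIdeal.mem_mk' _ _ _ _ _ _ a

/-- The ideal generated by all homomorphism defects. -/
def Eid : TwoSidedIdeal R' := TwoSidedIdeal.span {z | ∃ x y : R, z = jE φ x y}

lemma jE_mem_Eid (x y : R) : jE φ x y ∈ Eid φ :=
  TwoSidedIdeal.subset_span ⟨x, y, rfl⟩

lemma mem_annE_of_basic (w : R')
    (b1 : ∀ x y : R, w * jE φ x y = 0)
    (b2 : ∀ x y : R, jE φ x y * w = 0)
    (b3 : ∀ (r : R') (x y : R), w * (r * jE φ x y) = 0)
    (b4 : ∀ (x y : R) (r : R'), jE φ x y * r * w = 0) :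
    w ∈ annIdeal (Eid φ) := by
  rw [mem_annIdeal]
  intro e he
  rw [Eid, TwoSidedIdeal.mem_span_iff_mem_addSubgroup_closure_nonunital] at he
  induction he using AddSubgroup.closure_induction with
  | mem z hz =>
    obtain (((⟨x, y, rfl⟩ | ⟨z', ⟨x, y, rfl⟩, r, -, rfl⟩) |
        ⟨r, -, z', ⟨x, y, rfl⟩, rfl⟩) |
        ⟨-, ⟨r, -, z', ⟨x, y, rfl⟩, rfl⟩, s, -, rfl⟩) := hz
    · exact ⟨b1 x y, b2 x y⟩
    · refine ⟨?_, ?_⟩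
      · show w * (jE φ x y * r) = 0
        rw [← mul_assoc, b1, zero_mul]
      · show jE φ x y * r * w = 0
        exact b4 x y r
    · refine ⟨?_, ?_⟩
      · show w * (r * jE φ x y) = 0
        exact b3 r x y
      · show r * jE φ x y * w = 0
        rw [mul_assoc, b2, mul_zero]
    · refine ⟨?_, ?_⟩
      · show w * (r * jE φ x y * s) = 0
        rw [← mul_assoc, b3, zero_mul]
      · show r * jE φ x y * s * w = 0
        rw [mul_assoc r _ s, mul_assoc, b4, mul_zero]
  | zero => exact ⟨mul_zero w, zero_mul w⟩
  | add a b _ _ iha ihb =>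
      exact ⟨by rw [mul_add, iha.1, ihb.1, add_zero],
        by rw [add_mul, iha.2, ihb.2, add_zero]⟩
  | neg a _ iha =>
      exact ⟨by rw [mul_neg, iha.1, neg_zero], by rw [neg_mul, iha.2, neg_zero]⟩

include hadd hsq htri hsurj hsp htf in
lemma jD_mem_annE (u v : R) : jD φ u v ∈ annIdeal (Eid φ) := by
  apply mem_annE_of_basic
  · exact fun x y => c7d φ hadd hsq htri hsurj hsp htf x y u v
  · exact fun x y => c7e φ hadd hsq htri hsurj hsp htf x y u v
  · intro r x y
    rw [← mul_assoc]
    exact c6d φ hadd hsq htri hsurj hsp htf u x v y r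
  · exact fun x y r => c6e φ hadd hsq htri hsurj hsp htf x u y v r


/-- The annihilator of the defect ideal. -/
def J1 : TwoSidedIdeal R' := annIdeal (Eid φ)

/-- The annihilator of `J1`. -/
def J2 : TwoSidedIdeal R' := annIdeal (J1 φ)

lemma jD_mem_J1_all (u v : R)
    (hadd : ∀ x y, φ (x + y) = φ x + φ y)
    (hsq : ∀ x, φ (x * x) = φ x * φ x)
    (htri : ∀ x y, φ (x * y * x) = φ x * φ y * φ x)
    (hsurj : Function.Surjective φ)
    (hsp : IsSemiprimeRing R')
    (htf : ∀ x : R', x + x = 0 → x = 0) : jD φ u v ∈ J1 φ :=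
  jD_mem_annE φ hadd hsq htri hsurj hsp htf u v

lemma Eid_subset_J2 : ∀ e ∈ Eid φ, e ∈ J2 φ := fun e he =>
  mem_annIdeal.mpr fun j hj =>
    ⟨(mem_annIdeal.mp hj e he).2, (mem_annIdeal.mp hj e he).1⟩

lemma J1_disj_J2 (hsp : IsSemiprimeRing R') {t : R'}
    (h1 : t ∈ J1 φ) (h2 : t ∈ J2 φ) : t = 0 := by
  have h2' := mem_annIdeal.mp h2
  apply sqz hsp
  · intro m
    have hmt : m * t ∈ J1 φ := (J1 φ).mul_mem_left m t h1
    rw [mul_assoc]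
    exact (h2' _ hmt).1
  · exact (h2' _ h1).1

include hadd hsq htri hsurj hsp htf in
lemma jE_zero_left_of_memJ1 (u : R) (hu : φ u ∈ J1 φ) (x : R) : jE φ u x = 0 := by
  have hu' := mem_annIdeal.mp hu
  apply l1 hsp
  intro m
  have hq : jD φ u x = jE φ u x + (φ u * φ x - φ x * φ u) := by
    unfold jE jD; abel
  have h := c1e φ hadd hsq htri hsurj hsp htf u x m
  rw [hq, mul_add, mul_sub] at h
  have hpm : jE φ u x * m ∈ Eid φ := (Eid φ).mul_mem_right _ m (jE_mem_Eid φ u x)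
  have hpmx : jE φ u x * m * φ x ∈ Eid φ := (Eid φ).mul_mem_right _ _ hpm
  have h1 : jE φ u x * m * (φ u * φ x) = 0 := by
    rw [← mul_assoc, (hu' _ hpm).2, zero_mul]
  have h2 : jE φ u x * m * (φ x * φ u) = 0 := by
    rw [← mul_assoc]
    exact (hu' _ hpmx).2
  rw [h1, h2] at h
  simpa using h

include hadd hsq htri hsurj hsp htf in
lemma jE_zero_right_of_memJ1 (u : R) (hu : φ u ∈ J1 φ) (x : R) : jE φ x u = 0 := by
  have hu' := mem_annIdeal.mp hu
  apply l1 hsp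
  intro m
  have hq : jD φ x u = jE φ x u + (φ x * φ u - φ u * φ x) := by
    unfold jE jD; abel
  have h := c1e φ hadd hsq htri hsurj hsp htf x u m
  rw [hq, mul_add, mul_sub] at h
  have hpm : jE φ x u * m ∈ Eid φ := (Eid φ).mul_mem_right _ m (jE_mem_Eid φ x u)
  have hpmx : jE φ x u * m * φ x ∈ Eid φ := (Eid φ).mul_mem_right _ _ hpm
  have h1 : jE φ x u * m * (φ x * φ u) = 0 := by
    rw [← mul_assoc]
    exact (hu' _ hpmx).2
  have h2 : jE φ x u * m * (φ u * φ x) = 0 := by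
    rw [← mul_assoc, (hu' _ hpm).2, zero_mul]
  rw [h1, h2] at h
  simpa using h

include hadd hsq htri hsurj hsp htf in
lemma jD_zero_left_of_memJ2 (u : R) (hu : φ u ∈ J2 φ) (x : R) : jD φ u x = 0 := by
  have hu' := mem_annIdeal.mp hu
  apply l1 hsp
  intro m
  have hp : jE φ u x = jD φ u x + (φ x * φ u - φ u * φ x) := by
    unfold jE jD; abel
  have h := c1d φ hadd hsq htri hsurj hsp htf u x m
  rw [hp, mul_add, mul_sub] at h
  have hqm : jD φ u x * m ∈ J1 φ :=
    (J1 φ).mul_mem_right _ m (jD_mem_J1_all φ u x hadd hsq htri hsurj hsp htf)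
  have hqmx : jD φ u x * m * φ x ∈ J1 φ := (J1 φ).mul_mem_right _ _ hqm
  have h1 : jD φ u x * m * (φ x * φ u) = 0 := by
    rw [← mul_assoc]
    exact (hu' _ hqmx).2
  have h2 : jD φ u x * m * (φ u * φ x) = 0 := by
    rw [← mul_assoc, (hu' _ hqm).2, zero_mul]
  rw [h1, h2] at h
  simpa using h

include hadd hsq htri hsurj hsp htf in
lemma jD_zero_right_of_memJ2 (u : R) (hu : φ u ∈ J2 φ) (x : R) : jD φ x u = 0 := by
  have hu' := mem_annIdeal.mp hu
  apply l1 hsp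
  intro m
  have hp : jE φ x u = jD φ x u + (φ u * φ x - φ x * φ u) := by
    unfold jE jD; abel
  have h := c1d φ hadd hsq htri hsurj hsp htf x u m
  rw [hp, mul_add, mul_sub] at h
  have hqm : jD φ x u * m ∈ J1 φ :=
    (J1 φ).mul_mem_right _ m (jD_mem_J1_all φ x u hadd hsq htri hsurj hsp htf)
  have hqmx : jD φ x u * m * φ x ∈ J1 φ := (J1 φ).mul_mem_right _ _ hqm
  have h1 : jD φ x u * m * (φ u * φ x) = 0 := by
    rw [← mul_assoc, (hu' _ hqm).2, zero_mul]
  have h2 : jD φ x u * m * (φ x * φ u) = 0 := by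
    rw [← mul_assoc]
    exact (hu' _ hqmx).2
  rw [h1, h2] at h
  simpa using h

end Jordan
end JHAux


open JHAux

/-- If the commutator ideal `K` of `R` is a direct summand (there is an ideal `C`
with `K + C = R` and `K ∩ C = {0}`) and `R'` is a 2-torsion free semiprime ring,
then every surjective Jordan homomorphism `φ : R → R'` is the direct sum of a
homomorphism and an antihomomorphism from the ideal `R` onto the ideal `R'`. -/
theorem surjective_jordanHom_directSum_of_commutatorIdeal_summand
    {R R' : Type*} [NonUnitalRing R] [NonUnitalRing R']
    (φ : R → R') (hφ : IsJordanHom φ) (hsurj : Function.Surjective φ)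
    (C : TwoSidedIdeal R)
    (hsum : ∀ x : R, ∃ k ∈ commutatorIdeal R, ∃ c ∈ C, x = k + c)
    (hdisj : commutatorIdeal R ⊓ C = ⊥)
    (htf : ∀ a : R', a + a = 0 → a = 0) (hsp : IsSemiprimeRing R') :
    IsDirectSumHomAntihomOn φ (⊤ : TwoSidedIdeal R) (⊤ : TwoSidedIdeal R') := by
  obtain ⟨hadd, hsq, htri⟩ := hφ
  have hsp' : IsSemiprimeRing R' := hsp
  -- basic additive facts
  have h0 : φ 0 = 0 := by
    have h := hadd 0 0
    rw [add_zero] at h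
    exact left_eq_add.mp h
  have hneg : ∀ x : R, φ (-x) = -φ x := by
    intro x
    have h := hadd x (-x)
    rw [add_neg_cancel, h0] at h
    exact eq_neg_of_add_eq_zero_right h.symm
  have hsub : ∀ x y : R, φ (x - y) = φ x - φ y := by
    intro x y
    rw [sub_eq_add_neg, hadd, hneg, ← sub_eq_add_neg]
  have hyx : ∀ x y : R, φ (y * x) = φ y * φ x - jE φ x y := by
    intro x y
    have h2 : φ (y * x) = φ y * φ x + jE φ y x := by unfold jE; abel
    rw [h2, jE_skew φ hadd hsq, ← sub_eq_add_neg]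
  -- centrality of C
  have hcen : ∀ c ∈ C, ∀ x : R, c * x = x * c := by
    intro c hc x
    have h1 : c * x - x * c ∈ commutatorIdeal R :=
      TwoSidedIdeal.subset_span ⟨c, x, rfl⟩
    have h2 : c * x - x * c ∈ C :=
      C.sub_mem (C.mul_mem_right c x hc) (C.mul_mem_left x c hc)
    have h3 : c * x - x * c ∈ commutatorIdeal R ⊓ C :=
      (TwoSidedIdeal.mem_inf _).mpr ⟨h1, h2⟩
    rw [hdisj] at h3
    exact sub_eq_zero.mp ((TwoSidedIdeal.mem_bot _).mp h3)
  have hCED : ∀ c ∈ C, ∀ x : R, jE φ c x = 0 ∧ jD φ c x = 0 := by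
    intro c hc x
    have hcc : φ (c * x) = φ (x * c) := by rw [hcen c hc x]
    have hf := jF1 φ hadd hsq c x
    rw [hcen c hc x, hadd] at hf
    have hpq : jE φ c x + jD φ c x = 0 := by
      unfold jE jD
      rw [hcc]
      calc φ (x * c) - φ c * φ x + (φ (x * c) - φ x * φ c)
          = (φ (x * c) + φ (x * c)) - (φ c * φ x + φ x * φ c) := by abel
        _ = 0 := by rw [hf, sub_self]
    have hq := eq_neg_of_add_eq_zero_right hpq
    have hE0 : jE φ c x = 0 := by
      apply l1 hsp'
      intro m
      have h := c1e φ hadd hsq htri hsurj hsp' htf c x m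
      rw [hq, mul_neg] at h
      exact neg_eq_zero.mp h
    exact ⟨hE0, by rw [hq, hE0, neg_zero]⟩
  have hCmul : ∀ c ∈ C, ∀ x : R, φ (c * x) = φ c * φ x := by
    intro c hc x
    have h := (hCED c hc x).1
    unfold jE at h
    exact sub_eq_zero.mp h
  have hCmul' : ∀ c ∈ C, ∀ x : R, φ (c * x) = φ x * φ c := by
    intro c hc x
    have h := (hCED c hc x).2
    unfold jD at h
    exact sub_eq_zero.mp h
  have hCxc : ∀ c ∈ C, ∀ x : R, φ (x * c) = φ (c * x) := by
    intro c hc x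
    rw [← hcen c hc x]
  have hCE2 : ∀ c ∈ C, ∀ x : R, jE φ x c = 0 := by
    intro c hc x
    have h := (hCED c hc x).2
    unfold jD at h
    unfold jE
    rw [hCxc c hc x]
    exact h
  have hCcomm : ∀ c ∈ C, ∀ w : R', φ c * w = w * φ c := by
    intro c hc w
    obtain ⟨x, rfl⟩ := hsurj w
    rw [← hCmul c hc x, hCmul' c hc x]
  -- φ(C) ⊆ J1
  have hφCJ1 : ∀ c ∈ C, φ c ∈ J1 φ := by
    intro c hc
    have hb1 : ∀ x y : R, φ c * jE φ x y = 0 := by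
      intro x y
      have key : φ c * jE φ x y = jE φ (c * x) y := by
        unfold jE
        rw [mul_sub, ← hCmul c hc (x * y), ← mul_assoc (φ c) (φ x) (φ y),
          ← hCmul c hc x, ← mul_assoc c x y]
      rw [key]
      exact (hCED (c * x) (C.mul_mem_right c x hc) y).1
    have hb2 : ∀ x y : R, jE φ x y * φ c = 0 := by
      intro x y
      have key : jE φ x y * φ c = jE φ x (y * c) := by
        unfold jE
        rw [sub_mul, ← hCmul' c hc (x * y), mul_assoc (φ x) (φ y) (φ c),
          ← hCmul' c hc y, ← hCxc c hc (x * y), ← hCxc c hc y, mul_assoc x y c]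
      rw [key]
      exact hCE2 (y * c) (C.mul_mem_left y c hc) x
    apply mem_annE_of_basic
    · exact hb1
    · exact hb2
    · intro r x y
      rw [← mul_assoc, hCcomm c hc r, mul_assoc, hb1, mul_zero]
    · intro x y r
      rw [mul_assoc, ← hCcomm c hc r, ← mul_assoc, hb2, zero_mul]
  -- multiplicativity on preimages
  have hAmul : ∀ u : R, φ u ∈ J1 φ → ∀ z : R,
      φ (u * z) = φ u * φ z ∧ φ (z * u) = φ z * φ u := by
    intro u hu z
    constructor
    · have h := jE_zero_left_of_memJ1 φ hadd hsq htri hsurj hsp' htf u hu z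
      unfold jE at h
      exact sub_eq_zero.mp h
    · have h := jE_zero_right_of_memJ1 φ hadd hsq htri hsurj hsp' htf u hu z
      unfold jE at h
      exact sub_eq_zero.mp h
  have hBmul : ∀ u : R, φ u ∈ J2 φ → ∀ z : R,
      φ (u * z) = φ z * φ u ∧ φ (z * u) = φ u * φ z := by
    intro u hu z
    constructor
    · have h := jD_zero_left_of_memJ2 φ hadd hsq htri hsurj hsp' htf u hu z
      unfold jD at h
      exact sub_eq_zero.mp h
    · have h := jD_zero_right_of_memJ2 φ hadd hsq htri hsurj hsp' htf u hu z
      unfold jD at h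
      exact sub_eq_zero.mp h
  -- every element of φ(K) decomposes
  have hL : ∀ k ∈ commutatorIdeal R,
      ∃ a ∈ J1 φ, ∃ b ∈ J2 φ, φ k = a + b := by
    intro k hk
    set L : TwoSidedIdeal R := TwoSidedIdeal.mk'
      {x : R | ∃ a ∈ J1 φ, ∃ b ∈ J2 φ, φ x = a + b}
      ⟨0, (J1 φ).zero_mem, 0, (J2 φ).zero_mem, by rw [h0, add_zero]⟩
      (fun {x y} hx hy => by
        obtain ⟨a, ha, b, hb, hx⟩ := hx
        obtain ⟨a', ha', b', hb', hy⟩ := hy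
        exact ⟨a + a', (J1 φ).add_mem ha ha', b + b', (J2 φ).add_mem hb hb',
          by rw [hadd, hx, hy]; abel⟩)
      (fun {x} hx => by
        obtain ⟨a, ha, b, hb, hx⟩ := hx
        exact ⟨-a, (J1 φ).neg_mem ha, -b, (J2 φ).neg_mem hb,
          by rw [hneg, hx, neg_add]⟩)
      (fun {z x} hx => by
        obtain ⟨a, ha, b, hb, hx⟩ := hx
        refine ⟨φ z * a, (J1 φ).mul_mem_left _ _ ha,
          φ z * b + jE φ z x,
          (J2 φ).add_mem ((J2 φ).mul_mem_left _ _ hb)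
            (Eid_subset_J2 φ _ (jE_mem_Eid φ z x)), ?_⟩
        have he : φ (z * x) = φ z * φ x + jE φ z x := by unfold jE; abel
        rw [he, hx, mul_add]
        abel)
      (fun {x z} hx => by
        obtain ⟨a, ha, b, hb, hx⟩ := hx
        refine ⟨a * φ z, (J1 φ).mul_mem_right _ _ ha,
          b * φ z + jE φ x z,
          (J2 φ).add_mem ((J2 φ).mul_mem_right _ _ hb)
            (Eid_subset_J2 φ _ (jE_mem_Eid φ x z)), ?_⟩
        have he : φ (x * z) = φ x * φ z + jE φ x z := by unfold jE; abel
        rw [he, hx, add_mul]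
        abel) with hLdef
    have hkL : k ∈ L := by
      refine TwoSidedIdeal.mem_span_iff.mp hk L ?_
      rintro z ⟨x, y, rfl⟩
      rw [SetLike.mem_coe, TwoSidedIdeal.mem_mk']
      refine ⟨jD φ x y, jD_mem_J1_all φ x y hadd hsq htri hsurj hsp' htf,
        jE φ x y, Eid_subset_J2 φ _ (jE_mem_Eid φ x y), ?_⟩
      calc φ (x * y - y * x) = φ (x * y) - φ (y * x) := hsub _ _
        _ = φ (x * y) - (φ y * φ x - jE φ x y) := by rw [hyx x y]
        _ = jD φ x y + jE φ x y := by unfold jD; abel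
    rw [hLdef, TwoSidedIdeal.mem_mk'] at hkL
    exact hkL
  have hMain : ∀ x : R, ∃ a ∈ J1 φ, ∃ b ∈ J2 φ, φ x = a + b := by
    intro x
    obtain ⟨k, hk, c, hc, rfl⟩ := hsum x
    obtain ⟨a, ha, b, hb, hkab⟩ := hL k hk
    exact ⟨a + φ c, (J1 φ).add_mem ha (hφCJ1 c hc), b, hb,
      by rw [hadd, hkab]; abel⟩
  -- the two ideals of R
  refine ⟨TwoSidedIdeal.mk' {x : R | φ x ∈ J1 φ}
      (by show φ (0 : R) ∈ J1 φ; rw [h0]; exact (J1 φ).zero_mem)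
      (fun {x y} hx hy => by
        show φ (x + y) ∈ J1 φ; rw [hadd]; exact (J1 φ).add_mem hx hy)
      (fun {x} hx => by show φ (-x) ∈ J1 φ; rw [hneg]; exact (J1 φ).neg_mem hx)
      (fun {x y} hy => by
        show φ (x * y) ∈ J1 φ
        rw [(hAmul y hy x).2]
        exact (J1 φ).mul_mem_left _ _ hy)
      (fun {x y} hx => by
        show φ (x * y) ∈ J1 φ
        rw [(hAmul x hx y).1]
        exact (J1 φ).mul_mem_right _ _ hx),
    TwoSidedIdeal.mk' {x : R | φ x ∈ J2 φ}
      (by show φ (0 : R) ∈ J2 φ; rw [h0]; exact (J2 φ).zero_mem)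
      (fun {x y} hx hy => by
        show φ (x + y) ∈ J2 φ; rw [hadd]; exact (J2 φ).add_mem hx hy)
      (fun {x} hx => by show φ (-x) ∈ J2 φ; rw [hneg]; exact (J2 φ).neg_mem hx)
      (fun {x y} hy => by
        show φ (x * y) ∈ J2 φ
        rw [(hBmul y hy x).2]
        exact (J2 φ).mul_mem_right _ _ hy)
      (fun {x y} hx => by
        show φ (x * y) ∈ J2 φ
        rw [(hBmul x hx y).1]
        exact (J2 φ).mul_mem_left _ _ hx),
    ?_, ?_, ⟨J1 φ, J2 φ, ?_, ?_, ?_, ?_⟩, ?_, ?_⟩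
  · -- decomposition of R
    intro u
    constructor
    · intro _
      obtain ⟨a, ha, b, hb, hab⟩ := hMain u
      obtain ⟨v, hv⟩ := hsurj b
      refine ⟨u - v, ?_, v, ?_, by abel⟩
      · rw [TwoSidedIdeal.mem_mk']
        show φ (u - v) ∈ J1 φ
        rw [hsub, hv, hab]
        simpa using ha
      · rw [TwoSidedIdeal.mem_mk']
        show φ v ∈ J2 φ
        rw [hv]
        exact hb
    · exact fun _ => trivial
  · -- intersection is the kernel
    intro u
    constructor
    · rintro ⟨h1, h2⟩
      rw [TwoSidedIdeal.mem_mk'] at h1 h2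
      exact ⟨J1_disj_J2 φ hsp' h1 h2, trivial⟩
    · rintro ⟨h1, -⟩
      constructor
      · rw [TwoSidedIdeal.mem_mk']
        show φ u ∈ J1 φ
        rw [h1]
        exact (J1 φ).zero_mem
      · rw [TwoSidedIdeal.mem_mk']
        show φ u ∈ J2 φ
        rw [h1]
        exact (J2 φ).zero_mem
  · -- J1 is the image of I₁
    ext a
    simp only [SetLike.mem_coe, Set.mem_image, TwoSidedIdeal.coe_mk',
      Set.mem_setOf_eq]
    constructor
    · intro ha
      obtain ⟨x, rfl⟩ := hsurj a
      exact ⟨x, ha, rfl⟩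
    · rintro ⟨x, hx, rfl⟩
      exact hx
  · -- J2 is the image of I₂
    ext a
    simp only [SetLike.mem_coe, Set.mem_image, TwoSidedIdeal.coe_mk',
      Set.mem_setOf_eq]
    constructor
    · intro ha
      obtain ⟨x, rfl⟩ := hsurj a
      exact ⟨x, ha, rfl⟩
    · rintro ⟨x, hx, rfl⟩
      exact hx
  · -- J1 ⊓ J2 = ⊥
    refine SetLike.ext fun t => ?_
    rw [TwoSidedIdeal.mem_inf, TwoSidedIdeal.mem_bot]
    constructor
    · rintro ⟨h1, h2⟩
      exact J1_disj_J2 φ hsp' h1 h2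
    · rintro rfl
      exact ⟨(J1 φ).zero_mem, (J2 φ).zero_mem⟩
  · -- decomposition of R'
    intro a
    refine ⟨fun _ => ?_, fun _ => trivial⟩
    obtain ⟨x, rfl⟩ := hsurj a
    exact hMain x
  · -- homomorphism property on I₁
    intro u₁ h1 x
    rw [TwoSidedIdeal.mem_mk'] at h1
    exact (hAmul u₁ h1 x).1
  · -- antihomomorphism property on I₂
    intro u₂ h2 x
    rw [TwoSidedIdeal.mem_mk'] at h2
    exact (hBmul u₂ h2 x).1
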